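/- For every u ∈ {1,…,d−1}, the matrix σ_y^{(0u)} = E_{0u} − E_{u0} belongs to 𝔪, the real Lie subalgebra of d×d complex matrices generated by 𝔥 ∪ 𝔥'. -/

import Mathlib

open scoped Matrix

attribute [local instance 100] LieRing.ofAssociativeRing

/-- The d×d Fourier matrix V with entries V_{jk} = ω^{jk}/√d, ω = exp(2πi/d). -/
noncomputable def fourierV (d : ℕ) : Matrix (Fin d) (Fin d) ℂ :=
  Matrix.of fun j k =>
    Complex.exp (2 * Real.pi * Complex.I / d) ^ ((j : ℕ) * (k : ℕ)) / (Real.sqrt d : ℂ)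

/-- σ_y^{(jk)} = E_{jk} − E_{kj}. -/
def sigmaY {d : ℕ} (j k : Fin d) : Matrix (Fin d) (Fin d) ℂ :=
  Matrix.single j k 1 - Matrix.single k j 1

/-- 𝔥: the diagonal matrices diag(iα₀,…,iα_{d−1}) with real αⱼ. -/
def diagLie (d : ℕ) : Set (Matrix (Fin d) (Fin d) ℂ) :=
  {A | ∃ α : Fin d → ℝ, A = Matrix.diagonal fun j => Complex.I * (α j : ℂ)}

/-- 𝔥' = V 𝔥 V⁻¹. -/
noncomputable def diagLieConj (d : ℕ) : Set (Matrix (Fin d) (Fin d) ℂ) :=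
  {A | ∃ B ∈ diagLie d, A = fourierV d * B * (fourierV d)⁻¹}

/- ### Auxiliary material -/

noncomputable def fzeta (d : ℕ) : ℂ := Complex.exp (2 * Real.pi * Complex.I / d)

lemma fzeta_ne_zero (d : ℕ) : fzeta d ≠ 0 := Complex.exp_ne_zero _

lemma fourierV_apply (d : ℕ) (j k : Fin d) :
    fourierV d j k = fzeta d ^ ((j : ℕ) * (k : ℕ)) / (Real.sqrt d : ℂ) := rfl

lemma fin_dvd_iff {d : ℕ} (a b : Fin d) : (d:ℤ) ∣ ((a:ℤ) - (b:ℤ)) ↔ a = b := by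
  constructor
  · intro h
    have ha := a.isLt; have hb := b.isLt
    have h0 : ((a:ℤ) - (b:ℤ)) = 0 :=
      Int.eq_zero_of_abs_lt_dvd h (by rw [abs_lt]; omega)
    exact Fin.ext (by omega)
  · rintro rfl; simp

lemma sum_fzeta_zpow (d : ℕ) (hd : d ≠ 0) (t : ℤ) :
    ∑ m : Fin d, fzeta d ^ ((m:ℤ) * t) = if (d:ℤ) ∣ t then (d:ℂ) else 0 := by
  have hprim := Complex.isPrimitiveRoot_exp d hd
  have hx : ∀ m : Fin d, fzeta d ^ ((m:ℤ) * t) = (fzeta d ^ t) ^ (m:ℕ) := by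
    intro m
    rw [mul_comm, zpow_mul, zpow_natCast]
  simp_rw [hx]
  rw [Fin.sum_univ_eq_sum_range (fun m => (fzeta d ^ t) ^ m) d]
  by_cases h : (d:ℤ) ∣ t
  · have h1 : fzeta d ^ t = 1 := (hprim.zpow_eq_one_iff_dvd t).mpr h
    simp [h, h1]
  · have h1 : fzeta d ^ t ≠ 1 := fun hc => h ((hprim.zpow_eq_one_iff_dvd t).mp hc)
    rw [geom_sum_eq h1, if_neg h]
    have hfz : fzeta d ^ d = 1 := hprim.pow_eq_one
    have hx1 : (fzeta d ^ t) ^ d = 1 := by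
      rw [← zpow_natCast (fzeta d ^ t) d, ← zpow_mul, mul_comm t, zpow_mul, zpow_natCast,
        hfz, one_zpow]
    rw [hx1]
    simp

lemma fzeta_conj_pow (d : ℕ) (n : ℕ) :
    (starRingEnd ℂ) (fzeta d ^ n) = fzeta d ^ (-(n:ℤ)) := by
  have h : (starRingEnd ℂ) (fzeta d) = (fzeta d)⁻¹ := by
    rw [fzeta, ← Complex.exp_conj, ← Complex.exp_neg]
    congr 1
    rw [map_div₀, map_mul, map_mul, Complex.conj_I, Complex.conj_ofReal, map_ofNat,
      map_natCast]
    ring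
  rw [map_pow, h, inv_pow, zpow_neg, zpow_natCast]

lemma conj_entry (d : ℕ) (hd : d ≠ 0) (β : Fin d → ℂ) (j k : Fin d) :
    (fourierV d * Matrix.diagonal β * (fourierV d)ᴴ) j k
      = (1/(d:ℂ)) * ∑ m : Fin d, β m * fzeta d ^ ((m:ℤ) * ((j:ℤ) - (k:ℤ))) := by
  have hz := fzeta_ne_zero d
  have hsq : (Real.sqrt d : ℂ) * (Real.sqrt d : ℂ) = (d:ℂ) := by
    rw [← Complex.ofReal_mul, Real.mul_self_sqrt (Nat.cast_nonneg d)]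
    norm_num
  rw [Matrix.mul_apply, Finset.mul_sum]
  refine Finset.sum_congr rfl fun m _ => ?_
  rw [Matrix.mul_diagonal, Matrix.conjTranspose_apply, fourierV_apply, fourierV_apply,
    Complex.star_def, map_div₀, fzeta_conj_pow, Complex.conj_ofReal]
  have e : fzeta d ^ ((j:ℕ) * (m:ℕ)) * fzeta d ^ (-(((k:ℕ) * (m:ℕ) : ℕ):ℤ))
      = fzeta d ^ ((m:ℤ) * ((j:ℤ) - (k:ℤ))) := by
    rw [← zpow_natCast (fzeta d) ((j:ℕ) * (m:ℕ)), ← zpow_add₀ hz]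
    congr 1
    push_cast
    ring
  calc fzeta d ^ ((j:ℕ) * (m:ℕ)) / (Real.sqrt d : ℂ) * β m
        * (fzeta d ^ (-(((k:ℕ) * (m:ℕ) : ℕ):ℤ)) / (Real.sqrt d : ℂ))
      = β m * (fzeta d ^ ((j:ℕ) * (m:ℕ)) * fzeta d ^ (-(((k:ℕ) * (m:ℕ) : ℕ):ℤ)))
          / ((Real.sqrt d : ℂ) * (Real.sqrt d : ℂ)) := by ring
    _ = 1/(d:ℂ) * (β m * fzeta d ^ ((m:ℤ) * ((j:ℤ) - (k:ℤ)))) := by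
        rw [e, hsq]; ring

lemma fourierV_inv (d : ℕ) (hd : d ≠ 0) : (fourierV d)⁻¹ = (fourierV d)ᴴ := by
  apply Matrix.inv_eq_right_inv
  have hdc : (d:ℂ) ≠ 0 := Nat.cast_ne_zero.mpr hd
  ext j k
  have h1 : (fourierV d * (fourierV d)ᴴ) j k
      = (fourierV d * Matrix.diagonal (fun _ : Fin d => (1:ℂ)) * (fourierV d)ᴴ) j k := by
    rw [Matrix.diagonal_one, Matrix.mul_one]
  rw [h1, conj_entry d hd, Matrix.one_apply]
  simp_rw [one_mul]
  rw [sum_fzeta_zpow d hd]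
  by_cases h : j = k
  · rw [if_pos ((fin_dvd_iff j k).mpr h), if_pos h]
    field_simp
  · rw [if_neg (fun hc => h ((fin_dvd_iff j k).mp hc)), if_neg h, mul_zero]

lemma cos_cast (d : ℕ) (n : ℕ) :
    ((-2 * Real.cos (2 * Real.pi * n / d) : ℝ) : ℂ)
      = -(fzeta d ^ (n:ℤ) + fzeta d ^ (-(n:ℤ))) := by
  have h1 : fzeta d ^ (n:ℤ) = Complex.exp (((2 * Real.pi * n / d : ℝ):ℂ) * Complex.I) := by
    rw [zpow_natCast, fzeta, ← Complex.exp_nat_mul]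
    congr 1
    push_cast
    ring
  have h2 : fzeta d ^ (-(n:ℤ)) = Complex.exp (-((2 * Real.pi * n / d : ℝ):ℂ) * Complex.I) := by
    rw [zpow_neg, h1, ← Complex.exp_neg]
    ring_nf
  rw [h1, h2]
  have h3 := Complex.two_cos (((2 * Real.pi * n / d : ℝ) : ℂ))
  push_cast [Complex.ofReal_cos] at h3 ⊢
  linear_combination -h3

lemma sin_cast (d : ℕ) (n : ℕ) :
    ((2 * Real.sin (2 * Real.pi * n / d) : ℝ) : ℂ)
      = -Complex.I * (fzeta d ^ (n:ℤ) - fzeta d ^ (-(n:ℤ))) := by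
  have h1 : fzeta d ^ (n:ℤ) = Complex.exp (((2 * Real.pi * n / d : ℝ):ℂ) * Complex.I) := by
    rw [zpow_natCast, fzeta, ← Complex.exp_nat_mul]
    congr 1
    push_cast
    ring
  have h2 : fzeta d ^ (-(n:ℤ)) = Complex.exp (-((2 * Real.pi * n / d : ℝ):ℂ) * Complex.I) := by
    rw [zpow_neg, h1, ← Complex.exp_neg]
    ring_nf
  rw [h1, h2]
  have h3 := Complex.two_sin (((2 * Real.pi * n / d : ℝ) : ℂ))
  push_cast [Complex.ofReal_sin] at h3 ⊢
  linear_combination h3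

lemma Wc_entry (d : ℕ) (hd : d ≠ 0) (u : Fin d) (j k : Fin d) :
    (fourierV d * Matrix.diagonal
        (fun m : Fin d => Complex.I * ((-2 * Real.cos (2 * Real.pi * ((m:ℕ) * (u:ℕ)) / d) : ℝ) : ℂ))
      * (fourierV d)ᴴ) j k
    = -Complex.I * ((if (d:ℤ) ∣ ((j:ℤ) - (k:ℤ) + (u:ℤ)) then 1 else 0)
        + (if (d:ℤ) ∣ ((j:ℤ) - (k:ℤ) - (u:ℤ)) then 1 else 0)) := by
  have hz := fzeta_ne_zero d
  have hdc : (d:ℂ) ≠ 0 := Nat.cast_ne_zero.mpr hd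
  rw [conj_entry d hd]
  have step : ∀ m : Fin d,
      Complex.I * ((-2 * Real.cos (2 * Real.pi * ((m:ℕ) * (u:ℕ)) / d) : ℝ) : ℂ)
          * fzeta d ^ ((m:ℤ) * ((j:ℤ) - (k:ℤ)))
      = -Complex.I * (fzeta d ^ ((m:ℤ) * ((j:ℤ) - (k:ℤ) + (u:ℤ)))
          + fzeta d ^ ((m:ℤ) * ((j:ℤ) - (k:ℤ) - (u:ℤ)))) := by
    intro m
    have hx : 2 * Real.pi * (((m:ℕ):ℝ) * ((u:ℕ):ℝ)) / (d:ℝ)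
        = 2 * Real.pi * ((((m:ℕ) * (u:ℕ)) : ℕ) : ℝ) / (d:ℝ) := by
      push_cast
      ring
    rw [hx, cos_cast d ((m:ℕ) * (u:ℕ))]
    have e1 : fzeta d ^ ((m:ℤ) * ((j:ℤ) - (k:ℤ) + (u:ℤ)))
        = fzeta d ^ ((((m:ℕ) * (u:ℕ) : ℕ)):ℤ) * fzeta d ^ ((m:ℤ) * ((j:ℤ) - (k:ℤ))) := by
      rw [← zpow_add₀ hz]; congr 1; push_cast; ring
    have e2 : fzeta d ^ ((m:ℤ) * ((j:ℤ) - (k:ℤ) - (u:ℤ)))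
        = fzeta d ^ (-((((m:ℕ) * (u:ℕ) : ℕ)):ℤ)) * fzeta d ^ ((m:ℤ) * ((j:ℤ) - (k:ℤ))) := by
      rw [← zpow_add₀ hz]; congr 1; push_cast; ring
    rw [e1, e2]; ring
  simp_rw [step]
  rw [← Finset.mul_sum, Finset.sum_add_distrib, sum_fzeta_zpow d hd, sum_fzeta_zpow d hd]
  split_ifs <;> field_simp <;> ring

lemma Ws_entry (d : ℕ) (hd : d ≠ 0) (u : Fin d) (j k : Fin d) :
    (fourierV d * Matrix.diagonal
        (fun m : Fin d => Complex.I * ((2 * Real.sin (2 * Real.pi * ((m:ℕ) * (u:ℕ)) / d) : ℝ) : ℂ))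
      * (fourierV d)ᴴ) j k
    = (if (d:ℤ) ∣ ((j:ℤ) - (k:ℤ) + (u:ℤ)) then 1 else 0)
        - (if (d:ℤ) ∣ ((j:ℤ) - (k:ℤ) - (u:ℤ)) then 1 else 0) := by
  have hz := fzeta_ne_zero d
  have hdc : (d:ℂ) ≠ 0 := Nat.cast_ne_zero.mpr hd
  rw [conj_entry d hd]
  have step : ∀ m : Fin d,
      Complex.I * ((2 * Real.sin (2 * Real.pi * ((m:ℕ) * (u:ℕ)) / d) : ℝ) : ℂ)
          * fzeta d ^ ((m:ℤ) * ((j:ℤ) - (k:ℤ)))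
      = fzeta d ^ ((m:ℤ) * ((j:ℤ) - (k:ℤ) + (u:ℤ)))
          - fzeta d ^ ((m:ℤ) * ((j:ℤ) - (k:ℤ) - (u:ℤ))) := by
    intro m
    have hx : 2 * Real.pi * (((m:ℕ):ℝ) * ((u:ℕ):ℝ)) / (d:ℝ)
        = 2 * Real.pi * ((((m:ℕ) * (u:ℕ)) : ℕ) : ℝ) / (d:ℝ) := by
      push_cast
      ring
    rw [hx, sin_cast d ((m:ℕ) * (u:ℕ))]
    have e1 : fzeta d ^ ((m:ℤ) * ((j:ℤ) - (k:ℤ) + (u:ℤ)))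
        = fzeta d ^ ((((m:ℕ) * (u:ℕ) : ℕ)):ℤ) * fzeta d ^ ((m:ℤ) * ((j:ℤ) - (k:ℤ))) := by
      rw [← zpow_add₀ hz]; congr 1; push_cast; ring
    have e2 : fzeta d ^ ((m:ℤ) * ((j:ℤ) - (k:ℤ) - (u:ℤ)))
        = fzeta d ^ (-((((m:ℕ) * (u:ℕ) : ℕ)):ℤ)) * fzeta d ^ ((m:ℤ) * ((j:ℤ) - (k:ℤ))) := by
      rw [← zpow_add₀ hz]; congr 1; push_cast; ring
    rw [e1, e2]
    have hI : Complex.I * Complex.I = -1 := Complex.I_mul_I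
    linear_combination (fzeta d ^ (-((((m:ℕ) * (u:ℕ) : ℕ)):ℤ))
      - fzeta d ^ ((((m:ℕ) * (u:ℕ) : ℕ)):ℤ)) * fzeta d ^ ((m:ℤ) * ((j:ℤ) - (k:ℤ))) * hI
  simp_rw [step]
  rw [Finset.sum_sub_distrib, sum_fzeta_zpow d hd, sum_fzeta_zpow d hd]
  split_ifs <;> field_simp <;> ring

/-- For every u ∈ {1,…,d−1}, σ_y^{(0u)} = E_{0u} − E_{u0} belongs to the real
    Lie subalgebra 𝔪 generated by 𝔥 ∪ 𝔥'. -/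
theorem sigmaY_zero_u_mem_lieSpan (d : ℕ) [NeZero d] (u : Fin d) (hu : 1 ≤ (u : ℕ)) :
    sigmaY (0 : Fin d) u ∈
      LieSubalgebra.lieSpan ℝ (Matrix (Fin d) (Fin d) ℂ) (diagLie d ∪ diagLieConj d) := by
  classical
  have hd : d ≠ 0 := NeZero.ne d
  set K := LieSubalgebra.lieSpan ℝ (Matrix (Fin d) (Fin d) ℂ) (diagLie d ∪ diagLieConj d)
    with hK
  set α0 : Fin d → ℝ := fun m => if m = 0 then 1 else 0 with hα0
  set D : Matrix (Fin d) (Fin d) ℂ := Matrix.diagonal (fun m => Complex.I * (α0 m : ℂ)) with hD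
  set βc : Fin d → ℝ := fun m => -2 * Real.cos (2 * Real.pi * ((m:ℕ) * (u:ℕ)) / d) with hβc
  set βs : Fin d → ℝ := fun m => 2 * Real.sin (2 * Real.pi * ((m:ℕ) * (u:ℕ)) / d) with hβs
  set Wc : Matrix (Fin d) (Fin d) ℂ :=
    fourierV d * Matrix.diagonal (fun m => Complex.I * (βc m : ℂ)) * (fourierV d)⁻¹ with hWcdef
  set Ws : Matrix (Fin d) (Fin d) ℂ :=
    fourierV d * Matrix.diagonal (fun m => Complex.I * (βs m : ℂ)) * (fourierV d)⁻¹ with hWsdef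
  have hDK : D ∈ K := LieSubalgebra.subset_lieSpan (Or.inl ⟨α0, hD⟩)
  have hWcK : Wc ∈ K := LieSubalgebra.subset_lieSpan (Or.inr ⟨_, ⟨βc, rfl⟩, hWcdef⟩)
  have hWsK : Ws ∈ K := LieSubalgebra.subset_lieSpan (Or.inr ⟨_, ⟨βs, rfl⟩, hWsdef⟩)
  have hu0 : u ≠ 0 := by
    intro h
    rw [h] at hu
    simp at hu
  have hWc' : ∀ j k : Fin d, Wc j k
      = -Complex.I * ((if (d:ℤ) ∣ ((j:ℤ) - (k:ℤ) + (u:ℤ)) then 1 else 0)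
        + (if (d:ℤ) ∣ ((j:ℤ) - (k:ℤ) - (u:ℤ)) then 1 else 0)) := by
    intro j k
    rw [hWcdef, fourierV_inv d hd, hβc]
    exact Wc_entry d hd u j k
  have hWs' : ∀ j k : Fin d, Ws j k
      = (if (d:ℤ) ∣ ((j:ℤ) - (k:ℤ) + (u:ℤ)) then 1 else 0)
        - (if (d:ℤ) ∣ ((j:ℤ) - (k:ℤ) - (u:ℤ)) then 1 else 0) := by
    intro j k
    rw [hWsdef, fourierV_inv d hd, hβs]
    exact Ws_entry d hd u j k
  have lieD : ∀ (M : Matrix (Fin d) (Fin d) ℂ) (j k : Fin d),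
      ⁅D, M⁆ j k = (Complex.I * (α0 j : ℂ) - Complex.I * (α0 k : ℂ)) * M j k := by
    intro M j k
    rw [Ring.lie_def, Matrix.sub_apply, hD, Matrix.diagonal_mul, Matrix.mul_diagonal]
    ring
  have key : sigmaY (0 : Fin d) u = (1/2 : ℝ) • (⁅D, Wc⁆ - ⁅D, ⁅D, Ws⁆⁆) := by
    ext j k
    rw [Matrix.smul_apply, Matrix.sub_apply, lieD, lieD, lieD, hWc' j k, hWs' j k,
      Complex.real_smul]
    have hI : Complex.I * Complex.I = -1 := Complex.I_mul_I
    by_cases hj : j = 0 <;> by_cases hk : k = 0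
    · subst hj; subst hk
      simp [sigmaY, Matrix.single, hu0, Ne.symm hu0]
    · subst hj
      have hδ : ((d:ℤ) ∣ (((0:Fin d):ℤ) - (k:ℤ) + (u:ℤ))) ↔ u = k := by
        have e : (((0:Fin d):ℤ) - (k:ℤ) + (u:ℤ)) = ((u:ℤ) - (k:ℤ)) := by
          simp only [Fin.val_zero, Nat.cast_zero]
          ring
        rw [e, fin_dvd_iff]
      simp only [sigmaY, Matrix.sub_apply, Matrix.single, Matrix.of_apply, hα0, hδ,
        eq_self_iff_true, true_and, and_true, if_true]
      by_cases hku : u = k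
      · rw [if_pos hku, if_neg (fun h => hu0 h.1), if_neg hk]
        push_cast
        linear_combination hI
      · rw [if_neg hku, if_neg (fun h => hu0 h.1), if_neg hk]
        push_cast
        ring
    · subst hk
      have hδ : ((d:ℤ) ∣ ((j:ℤ) - ((0:Fin d):ℤ) - (u:ℤ))) ↔ j = u := by
        have e : ((j:ℤ) - ((0:Fin d):ℤ) - (u:ℤ)) = ((j:ℤ) - (u:ℤ)) := by
          simp only [Fin.val_zero, Nat.cast_zero]
          ring
        rw [e, fin_dvd_iff]
      simp only [sigmaY, Matrix.sub_apply, Matrix.single, Matrix.of_apply, hα0, hδ,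
        eq_self_iff_true, true_and, and_true, if_true]
      by_cases hju : j = u
      · rw [if_neg (fun h : (0:Fin d) = j ∧ u = (0:Fin d) => hj h.1.symm),
          if_pos hju.symm, if_neg hj, if_pos hju]
        push_cast
        linear_combination -hI
      · rw [if_neg (fun h : (0:Fin d) = j ∧ u = (0:Fin d) => hj h.1.symm),
          if_neg (fun h : u = j => hju h.symm), if_neg hj, if_neg hju]
        push_cast
        ring
    · simp only [sigmaY, Matrix.sub_apply, Matrix.single, Matrix.of_apply, hα0]
      rw [if_neg (fun h : (0:Fin d) = j ∧ u = k => hj h.1.symm),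
        if_neg (fun h : u = j ∧ (0:Fin d) = k => hk h.2.symm), if_neg hj, if_neg hk]
      push_cast
      ring
  rw [key]
  exact K.smul_mem _ (K.sub_mem (K.lie_mem hDK hWcK) (K.lie_mem hDK (K.lie_mem hDK hWsK)))
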